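/- Let (n_i) be a sequence of positive integers and 1 < p_i < q_i < 2 with sup_i n_i^{1/p_i − 1/q_i} < ∞. Then all of the continuum-many spaces (Σ_i ⊕ ℓ_{r_i}^{n_i})_2 with r_i ∈ {p_i, q_i} are mutually isomorphic, so the uniform homeomorphism relation on this class is trivial (all spaces equivalent) and hence smooth. -/

import Mathlib

open scoped NNReal ENNReal
open Finset

/-- ℓ^b norm is at most ℓ^a norm for a ≤ b (NNReal version). -/
lemma my_sum_rpow_anti {ι : Type*} [Fintype ι] (f : ι → ℝ≥0) {a b : ℝ}
    (ha : 0 < a) (hab : a ≤ b) :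
    (∑ i, f i ^ b) ^ (1 / b) ≤ (∑ i, f i ^ a) ^ (1 / a) := by
  have hb : 0 < b := ha.trans_le hab
  set S : ℝ≥0 := (∑ i, f i ^ a) ^ (1 / a) with hS
  have hSa : S ^ a = ∑ i, f i ^ a := by
    rw [hS, ← NNReal.rpow_mul, one_div, inv_mul_cancel₀ ha.ne', NNReal.rpow_one]
  have hfi : ∀ i, f i ≤ S := by
    intro i
    have h1 : f i ^ a ≤ S ^ a := by
      rw [hSa]
      exact Finset.single_le_sum (f := fun j => f j ^ a) (fun j _ => zero_le) (mem_univ i)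
    exact (NNReal.rpow_le_rpow_iff ha).1 h1
  have key : ∑ i, f i ^ b ≤ S ^ b := by
    have : ∀ i, f i ^ b ≤ S ^ (b - a) * f i ^ a := by
      intro i
      rcases eq_or_ne (f i) 0 with h0 | h0
      · simp [h0, NNReal.zero_rpow hb.ne', NNReal.zero_rpow ha.ne']
      · have : f i ^ b = f i ^ (b - a) * f i ^ a := by
          rw [← NNReal.rpow_add h0]; ring_nf
        rw [this]
        exact mul_le_mul_left (NNReal.rpow_le_rpow (hfi i) (sub_nonneg.2 hab)) _
    calc ∑ i, f i ^ b ≤ ∑ i, S ^ (b - a) * f i ^ a := Finset.sum_le_sum fun i _ => this i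
      _ = S ^ (b - a) * ∑ i, f i ^ a := by rw [Finset.mul_sum]
      _ = S ^ (b - a) * S ^ a := by rw [hSa]
      _ = S ^ b := by
          rcases eq_or_ne S 0 with h0 | h0
          · simp [h0, NNReal.zero_rpow ha.ne', NNReal.zero_rpow hb.ne']
          · rw [← NNReal.rpow_add h0]; ring_nf
  calc (∑ i, f i ^ b) ^ (1/b) ≤ (S ^ b) ^ (1/b) := NNReal.rpow_le_rpow key (by positivity)
    _ = S := by rw [← NNReal.rpow_mul, mul_one_div, div_self hb.ne', NNReal.rpow_one]

/-- ℓ^a norm is at most `card ^ (1/a - 1/b)` times ℓ^b norm for a ≤ b (NNReal version). -/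
lemma my_sum_rpow_holder {ι : Type*} [Fintype ι] (f : ι → ℝ≥0) {a b : ℝ}
    (ha : 0 < a) (hab : a ≤ b) :
    (∑ i, f i ^ a) ^ (1 / a) ≤
      (Fintype.card ι : ℝ≥0) ^ (1 / a - 1 / b) * (∑ i, f i ^ b) ^ (1 / b) := by
  have hb : 0 < b := ha.trans_le hab
  have hP : (1 : ℝ) ≤ b / a := (one_le_div ha).2 hab
  have H := NNReal.inner_le_weight_mul_Lp Finset.univ hP (fun _ : ι => 1) (fun i => f i ^ a)
  simp only [one_mul, Finset.sum_const, Finset.card_univ, nsmul_eq_mul, mul_one] at H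
  have Hexp : ∀ i, (f i ^ a) ^ (b / a) = f i ^ b := by
    intro i
    rw [← NNReal.rpow_mul, mul_div_cancel₀ _ ha.ne']
  simp only [Hexp] at H
  have H2 := NNReal.rpow_le_rpow H (le_of_lt (by positivity : (0:ℝ) < 1/a))
  rw [NNReal.mul_rpow, ← NNReal.rpow_mul, ← NNReal.rpow_mul] at H2
  have e1 : (1 - (b / a)⁻¹) * (1 / a) = 1 / a - 1 / b := by
    field_simp
  have e2 : (b / a)⁻¹ * (1 / a) = 1 / b := by
    field_simp
  rwa [e1, e2] at H2



/-- The finite-dimensional space `ℓ_r^n` (`ℝ^n` with the `r`-norm). -/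
noncomputable def lqn (r : ℝ) (hr : 1 ≤ r) (n : ℕ) : Type :=
  PiLp (ENNReal.ofReal r) (fun _ : Fin n => ℝ)

noncomputable instance (r : ℝ) (hr : 1 ≤ r) (n : ℕ) : NormedAddCommGroup (lqn r hr n) :=
  haveI : Fact (1 ≤ ENNReal.ofReal r) :=
    ⟨by simpa [ENNReal.ofReal_one] using ENNReal.ofReal_le_ofReal hr⟩
  inferInstanceAs (NormedAddCommGroup (PiLp (ENNReal.ofReal r) (fun _ : Fin n => ℝ)))

noncomputable instance (r : ℝ) (hr : 1 ≤ r) (n : ℕ) : NormedSpace ℝ (lqn r hr n) :=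
  haveI : Fact (1 ≤ ENNReal.ofReal r) :=
    ⟨by simpa [ENNReal.ofReal_one] using ENNReal.ofReal_le_ofReal hr⟩
  inferInstanceAs (NormedSpace ℝ (PiLp (ENNReal.ofReal r) (fun _ : Fin n => ℝ)))

/-- The identity as a linear equivalence between `ℓ_a^m` and `ℓ_b^m`. -/
noncomputable def lqnId {a b : ℝ} (ha : 1 ≤ a) (hb : 1 ≤ b) (m : ℕ) :
    lqn a ha m ≃ₗ[ℝ] lqn b hb m :=
  (WithLp.linearEquiv (ENNReal.ofReal a) ℝ (∀ _ : Fin m, ℝ)).trans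
    (WithLp.linearEquiv (ENNReal.ofReal b) ℝ (∀ _ : Fin m, ℝ)).symm

lemma lqnId_symm {a b : ℝ} (ha : 1 ≤ a) (hb : 1 ≤ b) (m : ℕ) :
    (lqnId ha hb m).symm = lqnId hb ha m := rfl

lemma lqn_nnnorm_eq {a : ℝ} (ha : 1 ≤ a) {m : ℕ} (x : lqn a ha m) :
    ‖x‖₊ = (∑ i, ‖(WithLp.equiv (ENNReal.ofReal a) (∀ _ : Fin m, ℝ) x) i‖₊ ^ a) ^ (1 / a) := by
  haveI : Fact (1 ≤ ENNReal.ofReal a) :=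
    ⟨by simpa [ENNReal.ofReal_one] using ENNReal.ofReal_le_ofReal ha⟩
  have h := PiLp.nnnorm_eq_sum (p := ENNReal.ofReal a) (β := fun _ : Fin m => ℝ)
    ENNReal.ofReal_ne_top x
  rw [ENNReal.toReal_ofReal (zero_le_one.trans ha)] at h
  exact h

lemma lqn_norm_mono {a b : ℝ} (ha : 1 ≤ a) (hb : 1 ≤ b) (hab : a ≤ b) (m : ℕ)
    (x : lqn a ha m) : ‖lqnId ha hb m x‖ ≤ ‖x‖ := by
  rw [← coe_nnnorm, ← coe_nnnorm, NNReal.coe_le_coe,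
    lqn_nnnorm_eq ha x, lqn_nnnorm_eq hb (lqnId ha hb m x)]
  exact my_sum_rpow_anti (fun i => ‖(WithLp.equiv (ENNReal.ofReal a) (∀ _ : Fin m, ℝ) x) i‖₊)
    (zero_lt_one.trans_le ha) hab

lemma lqn_norm_holder {a b : ℝ} (ha : 1 ≤ a) (hb : 1 ≤ b) (hba : b ≤ a) (m : ℕ)
    (x : lqn a ha m) : ‖lqnId ha hb m x‖ ≤ (m : ℝ) ^ (1 / b - 1 / a) * ‖x‖ := by
  rw [← coe_nnnorm, ← coe_nnnorm]
  have : ((m : ℝ) ^ (1 / b - 1 / a) : ℝ) = ((m : ℝ≥0) ^ (1 / b - 1 / a) : ℝ≥0) := by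
    rw [NNReal.coe_rpow, NNReal.coe_natCast]
  rw [this, ← NNReal.coe_mul, NNReal.coe_le_coe,
    lqn_nnnorm_eq ha x, lqn_nnnorm_eq hb (lqnId ha hb m x)]
  have := my_sum_rpow_holder
    (fun i => ‖(WithLp.equiv (ENNReal.ofReal a) (∀ _ : Fin m, ℝ) x) i‖₊)
    (zero_lt_one.trans_le hb) hba
  rw [Fintype.card_fin] at this
  exact this

section lpmap

variable {E F : ℕ → Type*} [∀ i, NormedAddCommGroup (E i)] [∀ i, NormedSpace ℝ (E i)]
  [∀ i, NormedAddCommGroup (F i)] [∀ i, NormedSpace ℝ (F i)]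

lemma memℓp_two_map (T : ∀ i, E i →ₗ[ℝ] F i) {K : ℝ} (hK : 0 ≤ K)
    (hT : ∀ i x, ‖T i x‖ ≤ K * ‖x‖) {f : ∀ i, E i} (hf : Memℓp f 2) :
    Memℓp (fun i => T i (f i)) 2 := by
  apply memℓp_gen
  have h2 : (0:ℝ) < (2:ℝ≥0∞).toReal := by norm_num
  have hs := hf.summable h2
  refine Summable.of_nonneg_of_le (fun i => Real.rpow_nonneg (norm_nonneg _) _) (fun i => ?_)
    (hs.mul_left (K ^ (2:ℝ≥0∞).toReal))
  calc ‖T i (f i)‖ ^ (2:ℝ≥0∞).toReal ≤ (K * ‖f i‖) ^ (2:ℝ≥0∞).toReal :=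
        Real.rpow_le_rpow (norm_nonneg _) (hT i (f i)) (by norm_num)
    _ = K ^ (2:ℝ≥0∞).toReal * ‖f i‖ ^ (2:ℝ≥0∞).toReal := Real.mul_rpow hK (norm_nonneg _)

noncomputable def lpMapL (T : ∀ i, E i →ₗ[ℝ] F i) {K : ℝ} (hK : 0 ≤ K)
    (hT : ∀ i x, ‖T i x‖ ≤ K * ‖x‖) : lp E 2 →ₗ[ℝ] lp F 2 where
  toFun f := ⟨fun i => T i (f i), memℓp_two_map T hK hT (lp.memℓp f)⟩
  map_add' f g := by
    apply Subtype.ext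
    funext i
    simp only [lp.coeFn_add, Pi.add_apply, map_add]
  map_smul' c f := by
    apply Subtype.ext
    funext i
    simp only [lp.coeFn_smul, Pi.smul_apply, map_smul, RingHom.id_apply]

lemma lpMapL_apply (T : ∀ i, E i →ₗ[ℝ] F i) {K : ℝ} (hK : 0 ≤ K)
    (hT : ∀ i x, ‖T i x‖ ≤ K * ‖x‖) (f : lp E 2) (i : ℕ) :
    (lpMapL T hK hT f : ∀ i, F i) i = T i (f i) := rfl

lemma lpMapL_norm (T : ∀ i, E i →ₗ[ℝ] F i) {K : ℝ} (hK : 0 ≤ K)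
    (hT : ∀ i x, ‖T i x‖ ≤ K * ‖x‖) (f : lp E 2) :
    ‖lpMapL T hK hT f‖ ≤ K * ‖f‖ := by
  have h2 : (0:ℝ) < (2:ℝ≥0∞).toReal := by norm_num
  apply lp.norm_le_of_tsum_le h2 (mul_nonneg hK (lp.norm_nonneg' f))
  have hpt : ∀ i, ‖(lpMapL T hK hT f : ∀ i, F i) i‖ ^ (2:ℝ≥0∞).toReal ≤
      K ^ (2:ℝ≥0∞).toReal * ‖f i‖ ^ (2:ℝ≥0∞).toReal := by
    intro i
    rw [lpMapL_apply]
    calc ‖T i (f i)‖ ^ (2:ℝ≥0∞).toReal ≤ (K * ‖f i‖) ^ (2:ℝ≥0∞).toReal :=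
          Real.rpow_le_rpow (norm_nonneg _) (hT i (f i)) (by norm_num)
      _ = _ := Real.mul_rpow hK (norm_nonneg _)
  calc ∑' i, ‖(lpMapL T hK hT f : ∀ i, F i) i‖ ^ (2:ℝ≥0∞).toReal
      ≤ ∑' i, K ^ (2:ℝ≥0∞).toReal * ‖f i‖ ^ (2:ℝ≥0∞).toReal :=
        Summable.tsum_le_tsum hpt ((lp.memℓp _).summable h2)
          (((lp.memℓp f).summable h2).mul_left _)
    _ = K ^ (2:ℝ≥0∞).toReal * ∑' i, ‖f i‖ ^ (2:ℝ≥0∞).toReal := tsum_mul_left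
    _ = K ^ (2:ℝ≥0∞).toReal * ‖f‖ ^ (2:ℝ≥0∞).toReal := by
        rw [lp.norm_rpow_eq_tsum h2]
    _ = (K * ‖f‖) ^ (2:ℝ≥0∞).toReal := (Real.mul_rpow hK (lp.norm_nonneg' f)).symm

noncomputable def lpEquivOfEquiv (T : ∀ i, E i ≃ₗ[ℝ] F i) {K : ℝ} (hK : 0 ≤ K)
    (h1 : ∀ i x, ‖T i x‖ ≤ K * ‖x‖) (h2 : ∀ i y, ‖(T i).symm y‖ ≤ K * ‖y‖) :
    lp E 2 ≃L[ℝ] lp F 2 :=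
  ContinuousLinearEquiv.equivOfInverse
    ((lpMapL (fun i => (T i).toLinearMap) hK h1).mkContinuous K
      (lpMapL_norm (fun i => (T i).toLinearMap) hK h1))
    ((lpMapL (fun i => (T i).symm.toLinearMap) hK h2).mkContinuous K
      (lpMapL_norm (fun i => (T i).symm.toLinearMap) hK h2))
    (fun f => by
      apply Subtype.ext
      funext i
      exact (T i).symm_apply_apply _)
    (fun f => by
      apply Subtype.ext
      funext i
      exact (T i).apply_symm_apply _)

end lpmap

/-- If `1 < p_i < q_i < 2`, `n_i ≥ 1` and `sup_i n_i^{1/p_i − 1/q_i} < ∞`, then any two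
of the spaces `(Σ_i ⊕ ℓ_{r_i}^{n_i})_2` with `r_i ∈ {p_i, q_i}` are isomorphic (in
particular uniformly homeomorphic), so the uniform homeomorphism relation on this
class is trivial and hence smooth. -/
theorem sums_mutually_isomorphic
    (p q : ℕ → ℝ) (n : ℕ → ℕ) (hn : ∀ i, 1 ≤ n i)
    (hpq : ∀ i, 1 < p i ∧ p i < q i ∧ q i < 2)
    (hsup : ∃ C : ℝ, ∀ i, (n i : ℝ) ^ (1 / p i - 1 / q i) ≤ C)
    (r r' : ℕ → ℝ)
    (hr : ∀ i, r i = p i ∨ r i = q i) (hr' : ∀ i, r' i = p i ∨ r' i = q i) :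
    ∃ T : lp (fun i => lqn (r i)
          (by rcases hr i with h | h <;> rw [h] <;>
              [exact (hpq i).1.le; exact ((hpq i).1.trans (hpq i).2.1).le]) (n i)) 2 ≃L[ℝ]
        lp (fun i => lqn (r' i)
          (by rcases hr' i with h | h <;> rw [h] <;>
              [exact (hpq i).1.le; exact ((hpq i).1.trans (hpq i).2.1).le]) (n i)) 2,
      UniformContinuous T ∧ UniformContinuous T.symm := by
  obtain ⟨C, hC⟩ := hsup
  set K : ℝ := max C 1 with hKdef
  have hK0 : (0:ℝ) ≤ K := le_trans zero_le_one (le_max_right _ _)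
  have hK1 : (1:ℝ) ≤ K := le_max_right _ _
  have hCK : C ≤ K := le_max_left _ _
  have h1r : ∀ i, (1:ℝ) ≤ r i := fun i => by
    rcases hr i with h | h <;> rw [h]
    · exact (hpq i).1.le
    · exact ((hpq i).1.trans (hpq i).2.1).le
  have h1r' : ∀ i, (1:ℝ) ≤ r' i := fun i => by
    rcases hr' i with h | h <;> rw [h]
    · exact (hpq i).1.le
    · exact ((hpq i).1.trans (hpq i).2.1).le
  have key : ∀ (i : ℕ) (a b : ℝ) (ha : 1 ≤ a) (hb : 1 ≤ b),
      (a = p i ∨ a = q i) → (b = p i ∨ b = q i) →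
      ∀ x : lqn a ha (n i), ‖lqnId ha hb (n i) x‖ ≤ K * ‖x‖ := by
    intro i a b ha hb hA hB x
    rcases le_or_gt a b with hab | hba
    · calc ‖lqnId ha hb (n i) x‖ ≤ ‖x‖ := lqn_norm_mono ha hb hab (n i) x
        _ ≤ K * ‖x‖ := le_mul_of_one_le_left (norm_nonneg x) hK1
    · have hcase : b = p i ∧ a = q i := by
        obtain ⟨h1, h2, h3⟩ := hpq i
        rcases hA with hA | hA <;> rcases hB with hB | hB <;> constructor <;> linarith
      obtain ⟨hbp, haq⟩ := hcase
      have hpow : ((n i : ℝ)) ^ (1/b - 1/a) ≤ K := by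
        rw [hbp, haq]; exact (hC i).trans hCK
      calc ‖lqnId ha hb (n i) x‖ ≤ (n i : ℝ) ^ (1/b - 1/a) * ‖x‖ :=
            lqn_norm_holder ha hb hba.le (n i) x
        _ ≤ K * ‖x‖ := mul_le_mul_of_nonneg_right hpow (norm_nonneg x)
  let T := lpEquivOfEquiv (fun i => lqnId (h1r i) (h1r' i) (n i)) hK0
      (fun i x => key i (r i) (r' i) (h1r i) (h1r' i) (hr i) (hr' i) x)
      (fun i y => key i (r' i) (r i) (h1r' i) (h1r i) (hr' i) (hr i) y)
  exact ⟨T, T.toContinuousLinearMap.uniformContinuous,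
    T.symm.toContinuousLinearMap.uniformContinuous⟩
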